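/- Let τ = (1 + √5)/2 and λ_k = (⌈k/τ⌉ + kτ)/τ² for k ∈ ℤ. For n ≥ 1 and k ∈ ℤ let w_k : {0, …, n−1} → ℝ be the n-letter word w_k(i) = λ_{k+i+1} − λ_{k+i}. Then the set { w_k : k ∈ ℤ } has exactly n + 1 elements (the Fibonacci chain is Sturmian with minimal complexity: there are exactly n+1 distinct n-letter words). -/

import Mathlib

open MeasureTheory Set Filter

noncomputable section

/-- The golden mean `τ = (1 + √5)/2`. -/
def tau : ℝ := (1 + Real.sqrt 5) / 2

/-- The cut-and-project model set `Σ^Ω = { a + bτ : a, b ∈ ℤ, a - b/τ ∈ Ω }`. -/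
def SigmaSet (Ω : Set ℝ) : Set ℝ :=
  {x | ∃ a b : ℤ, x = (a : ℝ) + (b : ℝ) * tau ∧ (a : ℝ) - (b : ℝ) / tau ∈ Ω}

/-- The increasing enumeration `λ_k = (⌈k/τ⌉ + kτ)/τ²` of the rescaled Fibonacci
chain `Σ^{[0,τ²)}`. -/
def fibChain (k : ℤ) : ℝ := ((⌈(k : ℝ) / tau⌉ : ℝ) + (k : ℝ) * tau) / tau ^ 2

namespace St14

lemma tau_pos : 0 < tau := Real.goldenRatio_pos
lemma tau_ne : tau ≠ 0 := ne_of_gt tau_pos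
lemma tau_sq : tau ^ 2 = tau + 1 := Real.goldenRatio_sq
lemma tau_irr : Irrational tau := Real.goldenRatio_irrational

def cseq (k : ℤ) : ℤ := ⌈((k:ℝ)+1)/tau⌉ - ⌈(k:ℝ)/tau⌉
def useq (k : ℤ) : ℝ := (⌈(k:ℝ)/tau⌉ : ℝ) - (k:ℝ)/tau
def fseq (m : ℕ) : ℝ := Int.fract ((m:ℝ)/tau)

lemma useq_nonneg (k : ℤ) : 0 ≤ useq k := by
  have := Int.le_ceil ((k:ℝ)/tau); unfold useq; linarith

lemma useq_lt_one (k : ℤ) : useq k < 1 := by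
  have := Int.ceil_lt_add_one ((k:ℝ)/tau); unfold useq; linarith

lemma useq_neg (m : ℕ) : useq (-(m:ℤ)) = fseq m := by
  unfold useq fseq
  have : ((-(m:ℤ) : ℤ):ℝ)/tau = -((m:ℝ)/tau) := by push_cast; ring
  rw [this, Int.ceil_neg, Int.fract]
  push_cast; ring

lemma fseq_inj {m m' : ℕ} (h : fseq m = fseq m') : m = m' := by
  by_contra hne
  have ⟨z, hz⟩ := Int.fract_eq_fract.mp h
  rw [div_sub_div_same, div_eq_iff tau_ne] at hz
  have hz0 : z ≠ 0 := by
    intro h0; rw [h0] at hz; push_cast at hz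
    have : (m:ℝ) = m' := by linarith
    exact hne (Nat.cast_injective this)
  have : tau = ((m:ℤ) - (m':ℤ) : ℤ) / (z:ℝ) := by
    push_cast
    rw [eq_div_iff (by exact_mod_cast hz0)]
    push_cast at hz; linarith
  exact (irrational_iff_ne_rational tau).mp tau_irr ((m:ℤ) - m') z hz0 (by exact_mod_cast this)

lemma fseq_pos {m : ℕ} (hm : 1 ≤ m) : 0 < fseq m := by
  rcases lt_or_eq_of_le (Int.fract_nonneg ((m:ℝ)/tau)) with h | h
  · exact h
  · exfalso
    have h0 : fseq m = fseq 0 := by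
      unfold fseq; rw [← h]; norm_num
    have := fseq_inj h0
    omega

lemma gap (k : ℤ) : fibChain (k+1) - fibChain k = ((cseq k : ℝ) + tau)/tau^2 := by
  unfold fibChain cseq
  have h : tau^2 ≠ 0 := pow_ne_zero 2 tau_ne
  push_cast
  field_simp
  ring

lemma csum (k : ℤ) (m : ℕ) :
    ∑ i ∈ Finset.range m, cseq (k + i) = ⌈((k:ℝ)+m)/tau⌉ - ⌈(k:ℝ)/tau⌉ := by
  induction m with
  | zero => simp
  | succ m ih =>
      rw [Finset.sum_range_succ, ih]
      unfold cseq
      have h1 : ((↑(k + (m:ℤ)) : ℝ)) = (k:ℝ) + m := by push_cast; ring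
      have h2 : ((k:ℝ) + ↑(m+1)) = ((k:ℝ) + m) + 1 := by push_cast; ring
      rw [h1, h2]
      ring

lemma ceil_split (k : ℤ) (m : ℕ) :
    (⌈((k:ℝ)+m)/tau⌉ : ℤ) - ⌈(k:ℝ)/tau⌉
      = ⌊(m:ℝ)/tau⌋ + (if useq k < fseq m then 1 else 0) := by
  have h0 : ((k:ℝ)+m)/tau = ((m:ℝ)/tau - useq k) + (⌈(k:ℝ)/tau⌉ : ℤ) := by
    unfold useq; push_cast; ring
  rw [h0, Int.ceil_add_intCast]
  have hu0 := useq_nonneg k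
  have hu1 := useq_lt_one k
  have hf0 : (0:ℝ) ≤ fseq m := Int.fract_nonneg _
  have hfd : fseq m = (m:ℝ)/tau - (⌊(m:ℝ)/tau⌋ : ℝ) := rfl
  have hlt := Int.lt_floor_add_one ((m:ℝ)/tau)
  by_cases h : useq k < fseq m
  · rw [if_pos h]
    have hc : ⌈(m:ℝ)/tau - useq k⌉ = ⌊(m:ℝ)/tau⌋ + 1 := by
      rw [Int.ceil_eq_iff]
      constructor <;> push_cast <;> linarith
    omega
  · rw [if_neg h]
    push_neg at h
    have hc : ⌈(m:ℝ)/tau - useq k⌉ = ⌊(m:ℝ)/tau⌋ := by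
      rw [Int.ceil_eq_iff]
      constructor <;> push_cast <;> linarith
    omega



lemma fseq_zero : fseq 0 = 0 := by unfold fseq; norm_num

def word (n : ℕ) (k : ℤ) : Fin n → ℝ :=
  fun i : Fin n => fibChain (k + (i.1 : ℤ) + 1) - fibChain (k + (i.1 : ℤ))

open Classical in
def T (n : ℕ) (k : ℤ) : ℕ :=
  ((Finset.Icc 1 n).filter (fun m => useq k < fseq m)).card

lemma word_eq (n : ℕ) (k : ℤ) (i : Fin n) :
    word n k i = ((cseq (k + (i.1:ℤ)) : ℝ) + tau) / tau^2 := gap (k + (i.1:ℤ))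

lemma cword (n : ℕ) (k : ℤ) (i : Fin n) :
    tau^2 * word n k i - tau = (cseq (k + (i.1:ℤ)) : ℝ) := by
  rw [word_eq]
  have h : tau^2 ≠ 0 := pow_ne_zero 2 tau_ne
  field_simp
  rw [add_sub_cancel_right, mul_div_cancel_left₀ _ tau_ne]

lemma sum_ite_lt {n : ℕ} {m : ℕ} (hm : m ≤ n) (g : ℕ → ℝ) :
    (∑ i : Fin n, if (i:ℕ) < m then g i else 0) = ∑ i ∈ Finset.range m, g i := by
  rw [Fin.sum_univ_eq_sum_range (fun i => if i < m then g i else 0) n]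
  rw [Finset.range_eq_Ico, ← Finset.sum_Ico_consecutive _ (Nat.zero_le m) hm,
      ← Finset.range_eq_Ico]
  have h2 : ∑ i ∈ Finset.Ico m n, (if i < m then g i else 0) = 0 :=
    Finset.sum_eq_zero fun i hi => by simp [Nat.not_lt.mpr (Finset.mem_Ico.mp hi).1]
  rw [h2, add_zero]
  exact Finset.sum_congr rfl fun i hi => by simp [Finset.mem_range.mp hi]

lemma key_sum (n : ℕ) (k : ℤ) (m : ℕ) (hm : m ≤ n) :
    (∑ i : Fin n, if (i:ℕ) < m then tau^2 * word n k i - tau else 0)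
      = (⌊(m:ℝ)/tau⌋ : ℝ) + (if useq k < fseq m then 1 else 0) := by
  have hpt : ∀ i : Fin n, (if (i:ℕ) < m then tau^2 * word n k i - tau else 0)
      = (if (i:ℕ) < m then ((cseq (k + ((i:ℕ):ℤ)) : ℝ)) else 0) := by
    intro i; by_cases h : (i:ℕ) < m <;> simp [h, cword]
  rw [Finset.sum_congr rfl (fun i _ => hpt i),
    sum_ite_lt hm (fun j => ((cseq (k + (j:ℤ)) : ℝ)))]
  have h2 : (∑ i ∈ Finset.range m, ((cseq (k + (i:ℤ)) : ℝ)))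
      = ((∑ i ∈ Finset.range m, cseq (k + (i:ℤ)) : ℤ) : ℝ) := by push_cast; rfl
  rw [h2, csum, ceil_split]
  split_ifs <;> push_cast <;> ring

lemma hcs (j : ℤ) (i : ℕ) :
    cseq (j + (i:ℤ)) = (⌈((j:ℝ)+((i+1:ℕ):ℝ))/tau⌉ - ⌈(j:ℝ)/tau⌉)
      - (⌈((j:ℝ)+((i:ℕ):ℝ))/tau⌉ - ⌈(j:ℝ)/tau⌉) := by
  unfold cseq; push_cast; ring_nf

open Classical in
lemma word_inj (n : ℕ) {k k' : ℤ} (hle : useq k ≤ useq k') (hT : T n k = T n k') :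
    word n k = word n k' := by
  have hsub : (Finset.Icc 1 n).filter (fun m => useq k' < fseq m) ⊆
      (Finset.Icc 1 n).filter (fun m => useq k < fseq m) := by
    intro m hm
    simp only [Finset.mem_filter] at *
    exact ⟨hm.1, lt_of_le_of_lt hle hm.2⟩
  have heq := Finset.eq_of_subset_of_card_le hsub (le_of_eq hT)
  have hiff : ∀ m : ℕ, m ≤ n →
      ((if useq k < fseq m then (1:ℤ) else 0) = if useq k' < fseq m then 1 else 0) := by
    intro m hm
    rcases Nat.eq_zero_or_pos m with h0 | h1
    · subst h0
      rw [fseq_zero, if_neg (not_lt.mpr (useq_nonneg k)), if_neg (not_lt.mpr (useq_nonneg k'))]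
    · have hmem : m ∈ Finset.Icc 1 n := Finset.mem_Icc.mpr ⟨h1, hm⟩
      have hiff2 : (useq k < fseq m) ↔ (useq k' < fseq m) := by
        constructor
        · intro h
          have hmm : m ∈ (Finset.Icc 1 n).filter (fun m => useq k < fseq m) :=
            Finset.mem_filter.mpr ⟨hmem, h⟩
          rw [← heq] at hmm
          exact (Finset.mem_filter.mp hmm).2
        · intro h
          have hmm : m ∈ (Finset.Icc 1 n).filter (fun m => useq k' < fseq m) :=
            Finset.mem_filter.mpr ⟨hmem, h⟩
          rw [heq] at hmm
          exact (Finset.mem_filter.mp hmm).2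
      simp [hiff2]
  funext i
  have hi2 : (i:ℕ) + 1 ≤ n := i.2
  have hceq : cseq (k + ((i:ℕ):ℤ)) = cseq (k' + ((i:ℕ):ℤ)) := by
    rw [hcs k i.1, hcs k' i.1, ceil_split k (i.1), ceil_split k (i.1+1),
      ceil_split k' (i.1), ceil_split k' (i.1+1),
      hiff _ hi2, hiff _ (le_of_lt i.2)]
  rw [word_eq, word_eq, hceq]

open Classical in
lemma T_neg (n m : ℕ) :
    T n (-(m:ℤ)) = ((Finset.Icc 1 n).filter (fun m' => fseq m < fseq m')).card := by
  unfold T; rw [useq_neg]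

open Classical in
lemma M_lt {n m m' : ℕ} (h : fseq m < fseq m') (hm'n : m' ≤ n) :
    ((Finset.Icc 1 n).filter (fun x => fseq m' < fseq x)).card
      < ((Finset.Icc 1 n).filter (fun x => fseq m < fseq x)).card := by
  have hsub : (Finset.Icc 1 n).filter (fun x => fseq m' < fseq x) ⊆
      (Finset.Icc 1 n).filter (fun x => fseq m < fseq x) := by
    intro x hx
    simp only [Finset.mem_filter] at *
    exact ⟨hx.1, lt_trans h hx.2⟩
  apply Finset.card_lt_card
  refine (Finset.ssubset_iff_of_subset hsub).mpr ⟨m', ?_, ?_⟩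
  · have hm'1 : 1 ≤ m' := by
      rcases Nat.eq_zero_or_pos m' with h0 | h1
      · exfalso; rw [h0, fseq_zero] at h
        exact absurd h (not_lt.mpr (Int.fract_nonneg _))
      · exact h1
    exact Finset.mem_filter.mpr ⟨Finset.mem_Icc.mpr ⟨hm'1, hm'n⟩, h⟩
  · simp

end St14

/-- the Fibonacci chain has exactly `n + 1` distinct `n`-letter words
(Sturmian minimal complexity). -/


theorem statement14 (n : ℕ) (hn : 1 ≤ n) :
    {w : Fin n → ℝ | ∃ k : ℤ,
        w = fun i : Fin n =>
          fibChain (k + (i.1 : ℤ) + 1) - fibChain (k + (i.1 : ℤ))}.ncard = n + 1 := by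
  classical
  have hset : {w : Fin n → ℝ | ∃ k : ℤ,
      w = fun i : Fin n =>
        fibChain (k + (i.1 : ℤ) + 1) - fibChain (k + (i.1 : ℤ))}
      = Set.range (St14.word n) := by
    ext w
    constructor
    · rintro ⟨k, rfl⟩; exact ⟨k, rfl⟩
    · rintro ⟨k, rfl⟩; exact ⟨k, rfl⟩
  rw [hset]
  set Φ : (Fin n → ℝ) → ℕ := fun w =>
    ((Finset.Icc 1 n).filter (fun m : ℕ =>
      ((⌊(m:ℝ)/tau⌋ : ℝ) < ∑ i : Fin n, if (i:ℕ) < m then tau^2 * w i - tau else 0))).card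
    with hΦ
  have hΦT : ∀ k : ℤ, Φ (St14.word n k) = St14.T n k := by
    intro k
    unfold St14.T
    apply congrArg Finset.card
    apply Finset.filter_congr
    intro m hm
    have hmn : m ≤ n := (Finset.mem_Icc.mp hm).2
    rw [St14.key_sum n k m hmn]
    by_cases h : St14.useq k < St14.fseq m <;> simp [h]
  have hTle : ∀ k : ℤ, St14.T n k ≤ n := by
    intro k
    calc St14.T n k ≤ (Finset.Icc 1 n).card := Finset.card_filter_le _ _
      _ = n := by rw [Nat.card_Icc]; omega
  have hinj : Set.InjOn Φ (Set.range (St14.word n)) := by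
    rintro w ⟨k, rfl⟩ w' ⟨k', rfl⟩ h
    rw [hΦT, hΦT] at h
    rcases le_total (St14.useq k) (St14.useq k') with hle | hle
    · exact St14.word_inj n hle h
    · exact (St14.word_inj n hle h.symm).symm
  have himg : Φ '' (Set.range (St14.word n)) = Set.Iic n := by
    apply Set.Subset.antisymm
    · rintro j ⟨w, ⟨k, rfl⟩, rfl⟩
      rw [hΦT]
      exact Set.mem_Iic.mpr (hTle k)
    · intro j hj
      have hinjOn : Set.InjOn (fun m : ℕ => St14.T n (-(m:ℤ))) ↑(Finset.Icc 0 n) := by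
        intro m hm m' hm' hT
        by_contra hne
        have hfne : St14.fseq m ≠ St14.fseq m' := fun h => hne (St14.fseq_inj h)
        simp only [St14.T_neg] at hT
        simp only [Finset.coe_Icc, Set.mem_Icc] at hm hm'
        rcases hfne.lt_or_gt with h | h
        · exact absurd hT (Nat.ne_of_gt (St14.M_lt h hm'.2))
        · exact absurd hT.symm (Nat.ne_of_gt (St14.M_lt h hm.2))
      have hF : (Finset.Icc 0 n).image (fun m : ℕ => St14.T n (-(m:ℤ))) = Finset.Iic n := by
        apply Finset.eq_of_subset_of_card_le
        · intro x hx
          obtain ⟨m, _, rfl⟩ := Finset.mem_image.mp hx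
          exact Finset.mem_Iic.mpr (hTle _)
        · rw [Nat.card_Iic, Finset.card_image_of_injOn hinjOn, Nat.card_Icc]
          omega
      have hj2 : j ∈ Finset.Iic n := Finset.mem_Iic.mpr (Set.mem_Iic.mp hj)
      rw [← hF] at hj2
      obtain ⟨m, _, hm⟩ := Finset.mem_image.mp hj2
      exact ⟨St14.word n (-(m:ℤ)), ⟨-(m:ℤ), rfl⟩, by rw [hΦT]; exact hm⟩
  rw [← Set.ncard_image_of_injOn hinj, himg, ← Finset.coe_Iic, Set.ncard_coe_finset,
    Nat.card_Iic]
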